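/- Suppose y : ℕ → (Fin T → ℝ^p) is a sequence of T-step trajectories (y(t) has components y(t)(k)) such that lim_{t→∞} ‖y(t+1)(k) - y(t)(k+1 mod T)‖ = 0 for all k ∈ Fin T. Then for each k, lim_{t→∞} ‖y(t+T)(k) - y(t)(k)‖ = 0, i.e., the trajectory sequence is asymptotically T-periodic in t. -/

import Mathlib

open Fin.NatCast

theorem asymptotically_periodic (p T : ℕ) [NeZero T]
    (y : ℕ → Fin T → EuclideanSpace ℝ (Fin p))
    (h : ∀ k : Fin T,
      Filter.Tendsto (fun t => ‖y (t + 1) k - y t (k + 1)‖) Filter.atTop (nhds 0)) :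
    ∀ k : Fin T,
      Filter.Tendsto (fun t => ‖y (t + T) k - y t k‖) Filter.atTop (nhds 0) := by
  intro k
  set f : ℕ → Fin T := fun j => k + ((T - j : ℕ) : Fin T) with hf
  have hf0 : f 0 = k := by simp [hf]
  have hfT : f T = k := by simp [hf]
  have hstep : ∀ j, j < T → f j = f (j + 1) + 1 := by
    intro j hj
    simp only [hf]
    have : ((T - (j + 1) : ℕ) : Fin T) + 1 = ((T - j : ℕ) : Fin T) := by
      have h1 : T - (j + 1) + 1 = T - j := by omega
      rw [← h1, Nat.cast_add, Nat.cast_one]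
    rw [add_assoc, this]
  have key : ∀ t, y (t + T) k - y t k =
      ∑ j ∈ Finset.range T, (y (t + (j + 1)) (f (j + 1)) - y (t + j) (f j)) := by
    intro t
    rw [Finset.sum_range_sub (fun j => y (t + j) (f j))]
    simp [hf0, hfT]
  have hsum : Filter.Tendsto
      (fun t => ∑ j ∈ Finset.range T, ‖y (t + (j + 1)) (f (j + 1)) - y (t + j) (f j)‖)
      Filter.atTop (nhds 0) := by
    have h0 : (0 : ℝ) = ∑ _j ∈ Finset.range T, (0 : ℝ) := by simp
    rw [h0]
    refine tendsto_finset_sum _ (fun j hj => ?_)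
    have hj' : j < T := Finset.mem_range.mp hj
    have := (h (f (j + 1))).comp (Filter.tendsto_add_atTop_nat j)
    refine this.congr (fun t => ?_)
    simp only [Function.comp]
    rw [← hstep j hj']
    ring_nf
  refine squeeze_zero (fun t => norm_nonneg _) (fun t => ?_) hsum
  rw [key t]
  exact norm_sum_le _ _
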